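/- Every hyperbolic unit disk graph admits a co-bipartite neighborhood edge elimination ordering (CNEEO). That is, if V is a finite set, p : V → ℍ² is a family of points in the hyperbolic plane, R ≥ 0, and G is the simple graph on V with u adjacent to v iff u ≠ v and d(p(u), p(v)) ≤ R, then there exists an ordering (e_1,…,e_m) of all edges of G such that for every i, letting G_L[i] be the spanning subgraph of G with edge set {e_i,…,e_m} and N_i the set of common neighbors in G_L[i] of the two endpoints of e_i, the vertex set N_i can be partitioned into two (possibly empty) sets each of which is a clique of G. -/

import Mathlib

/-- `L` is a co-bipartite neighborhood edge elimination ordering (CNEEO) of `G`: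
an ordering of all edges of `G` such that for every `i`, letting `G_L[i]` be the
spanning subgraph with edge set `{e_i, …, e_m}` and `N_i` the set of common neighbors
in `G_L[i]` of the two endpoints of `e_i`, the set `N_i` can be partitioned into two
(possibly empty) cliques of `G`. -/
def IsCNEEO {V : Type*} (G : SimpleGraph V) (L : List (Sym2 V)) : Prop :=
  L.Nodup ∧ (∀ e, e ∈ L ↔ e ∈ G.edgeSet) ∧
  ∀ i : Fin L.length, ∃ A B : Set V,
    {w | ∀ x ∈ L.get i, (G.deleteEdges {e | e ∈ L.take i.1}).Adj x w} = A ∪ B ∧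
    Disjoint A B ∧ G.IsClique A ∧ G.IsClique B

section CNEEOAux
open UpperHalfPlane Complex Matrix
noncomputable section


lemma dist_le_dist_iff_aux (z w z' w' : ℍ) :
    dist z w ≤ dist z' w' ↔
      Complex.normSq ((z:ℂ) - w) * (z'.im * w'.im) ≤
      Complex.normSq ((z':ℂ) - w') * (z.im * w.im) := by
  have h0 : dist z w ≤ dist z' w' ↔ Real.cosh (dist z w) ≤ Real.cosh (dist z' w') := by
    rw [Real.cosh_le_cosh, _root_.abs_of_nonneg dist_nonneg, _root_.abs_of_nonneg dist_nonneg]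
  rw [h0, UpperHalfPlane.cosh_dist, UpperHalfPlane.cosh_dist]
  have h1 : (0:ℝ) < 2 * z.im * w.im := by
    have := z.im_pos; have := w.im_pos; positivity
  have h2 : (0:ℝ) < 2 * z'.im * w'.im := by
    have := z'.im_pos; have := w'.im_pos; positivity
  rw [add_le_add_iff_left, div_le_div_iff₀ h1 h2]
  rw [Complex.dist_eq, Complex.dist_eq, Complex.sq_norm, Complex.sq_norm]
  constructor <;> intro h <;> nlinarith


def rotSL (c s : ℝ) (h : c^2 + s^2 = 1) : Matrix.SpecialLinearGroup (Fin 2) ℝ :=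
  ⟨!![c, s; -s, c], by simp [Matrix.det_fin_two_of]; nlinarith⟩

lemma rot_coe (c s : ℝ) (h : c^2+s^2=1) (z : ℍ) :
    ((rotSL c s h • z : ℍ) : ℂ) = (c*z + s)/(-s*z + c) := by
  rw [UpperHalfPlane.specialLinearGroup_apply]
  simp [rotSL, coe_mk]

def mkI : ℍ := UpperHalfPlane.mk Complex.I (by simp)

lemma mkI_coe : (mkI : ℂ) = Complex.I := rfl

lemma rot_fix_I (c s : ℝ) (h : c^2+s^2=1) : rotSL c s h • mkI = mkI := by
  have hden : (-(s:ℂ)*Complex.I + c) ≠ 0 := by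
    intro hc
    have h1 : (-(s:ℂ)*Complex.I + c).re = 0 := by rw [hc]; simp
    have h2 : (-(s:ℂ)*Complex.I + c).im = 0 := by rw [hc]; simp
    simp at h1 h2
    nlinarith [h, h1, h2]
  apply UpperHalfPlane.ext
  rw [rot_coe, mkI_coe, div_eq_iff hden]
  apply Complex.ext <;> simp


lemma rot_re_zero (v : ℍ) (c s : ℝ) (hcs : c^2+s^2=1)
    (hnum : v.re*(c^2-s^2) + c*s*(1-v.re^2-v.im^2) = 0) :
    (rotSL c s hcs • v).re = 0 := by
  rw [← UpperHalfPlane.coe_re, rot_coe, Complex.div_re, ← add_div,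
    div_eq_zero_iff]
  left
  simp only [Complex.add_re, Complex.add_im, Complex.mul_re, Complex.mul_im,
    Complex.ofReal_re, Complex.ofReal_im, Complex.neg_re, Complex.neg_im,
    UpperHalfPlane.coe_re, UpperHalfPlane.coe_im]
  linear_combination hnum

/-- rotation making the rotated point purely imaginary -/
lemma exists_rot (v : ℍ) : ∃ g : Matrix.SpecialLinearGroup (Fin 2) ℝ,
    g • mkI = mkI ∧ (g • v).re = 0 := by
  by_cases hx : v.re = 0
  · exact ⟨rotSL 1 0 (by norm_num), rot_fix_I 1 0 (by norm_num), by
      have : ((rotSL 1 0 (by norm_num) • v : ℍ) : ℂ) = v := by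
        rw [rot_coe]; simp
      rw [← UpperHalfPlane.coe_re, this, UpperHalfPlane.coe_re, hx]⟩
  · set x := v.re with hxdef
    set y := v.im with hydef
    set k : ℝ := (1 - x^2 - y^2)/2 with hk
    set Rt : ℝ := Real.sqrt (k^2 + x^2) with hRt
    have hRt2 : Rt^2 = k^2 + x^2 := Real.sq_sqrt (by positivity)
    set r : ℝ := (k + Rt)/x with hr
    have hr2 : x^2 * r^2 = (k+Rt)^2 := by
      rw [hr]; field_simp
    have h1r : (0:ℝ) < 1 + r^2 := by positivity
    set c : ℝ := 1/Real.sqrt (1+r^2) with hc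
    have hcpos : 0 < c := by rw [hc]; positivity
    have hc2 : c^2 = 1/(1+r^2) := by
      rw [hc, div_pow, one_pow, Real.sq_sqrt h1r.le]
    set s : ℝ := r * c with hs
    have hcs : c^2 + s^2 = 1 := by
      rw [hs, mul_pow, hc2]; field_simp
    refine ⟨rotSL c s hcs, rot_fix_I c s hcs, ?_⟩
    -- numerator identity
    have hnum : x*(c^2-s^2) + c*s*(1-x^2-y^2) = 0 := by
      have key : x*(1-r^2) + 2*k*r = 0 := by
        have : x * (x*(1-r^2) + 2*k*r) = 0 := by
          have expand : x * (x*(1-r^2) + 2*k*r) = x^2 - x^2*r^2 + 2*k*(r*x) := by ring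
          have hrx : r * x = k + Rt := by rw [hr]; field_simp
          rw [expand, hr2, hrx]; nlinarith [hRt2]
        rcases mul_eq_zero.1 this with h | h
        · exact absurd h hx
        · exact h
      have : x*(c^2-s^2) + c*s*(1-x^2-y^2) = c^2 * (x*(1-r^2) + 2*k*r) := by
        rw [hs, hk]; ring
      rw [this, key, mul_zero]
    exact rot_re_zero v c s hcs hnum

lemma sq_sub_le_left (x1 x2 : ℝ) (hx : 0 ≤ x1*x2) (h : x2^2 ≤ x1^2) :
    (x1-x2)^2 ≤ x1^2 := by
  nlinarith [mul_nonneg (sq_nonneg x2) (sub_nonneg.2 h), hx, sq_nonneg x2, sq_nonneg (x1-x2)]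

lemma Sflip_re_im (w : ℍ) (hre : w.re = 0) :
    (rotSL 0 (-1) (by norm_num) • w).re = 0 ∧
    (rotSL 0 (-1) (by norm_num) • w).im = 1 / w.im := by
  have hco : ((rotSL 0 (-1) (by norm_num) • w : ℍ) : ℂ) = -1 / w := by
    rw [rot_coe]; push_cast; ring_nf
  have h1 : (w:ℂ).re = 0 := by rw [UpperHalfPlane.coe_re]; exact hre
  constructor
  · rw [← UpperHalfPlane.coe_re, hco, Complex.div_re]
    simp [Complex.normSq_apply, h1]
    left; exact hre
  · rw [← UpperHalfPlane.coe_im, hco, Complex.div_im]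
    rw [← UpperHalfPlane.coe_im]
    have hne : (w:ℂ).im ≠ 0 := by rw [UpperHalfPlane.coe_im]; exact w.im_pos.ne'
    simp [Complex.normSq_apply, h1]
    field_simp
    rw [hre]; ring

lemma exists_normalizer (u v : ℍ) : ∃ f : ℍ → ℍ,
    (∀ z w : ℍ, dist (f z) (f w) = dist z w) ∧ f u = mkI ∧ (f v).re = 0 ∧ 1 ≤ (f v).im := by
  have hy : 0 < u.im := u.im_pos
  set f1 : ℍ → ℍ := fun z => (⟨1/u.im, by positivity⟩ : {a : ℝ // 0 < a}) • ((-u.re) +ᵥ z)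
    with hf1def
  have hf1dist : ∀ z w : ℍ, dist (f1 z) (f1 w) = dist z w := by
    intro z w
    rw [hf1def]
    simp only
    rw [(UpperHalfPlane.isometry_pos_mul _).dist_eq, (UpperHalfPlane.isometry_real_vadd _).dist_eq]
  have hf1u : f1 u = mkI := by
    apply UpperHalfPlane.ext
    rw [hf1def]
    simp only [UpperHalfPlane.coe_pos_real_smul, UpperHalfPlane.coe_vadd, mkI_coe]
    apply Complex.ext <;>
      simp [Complex.real_smul, Complex.add_re, Complex.add_im] <;>
      field_simp
  obtain ⟨g, hgI, hgre⟩ := exists_rot (f1 v)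
  rcases le_or_gt 1 ((g • f1 v).im) with him | him
  · refine ⟨fun z => g • f1 z, ?_, ?_, hgre, him⟩
    · intro z w; rw [dist_smul, hf1dist]
    · show g • f1 u = mkI
      rw [hf1u, hgI]
  · set S := rotSL 0 (-1) (by norm_num) with hS
    obtain ⟨hre', him'⟩ := Sflip_re_im (g • f1 v) hgre
    refine ⟨fun z => S • (g • f1 z), ?_, ?_, hre', ?_⟩
    · intro z w; rw [dist_smul, dist_smul, hf1dist]
    · show S • (g • f1 u) = mkI
      rw [hf1u, hgI, hS, rot_fix_I]
    · rw [him']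
      rw [le_div_iff₀ ((g • f1 v).im_pos)]
      linarith
lemma aux_one_le (t y : ℝ) (ht : 1 ≤ t) (hy : 0 < y) (hQ : 0 ≤ (t^2+1)*y - y^2 - t^2) : 1 ≤ y := by
  by_contra h
  push_neg at h
  have h2 : 1 ≤ t^2 := by nlinarith
  have := mul_pos (by linarith : (0:ℝ) < 1 - y) (by linarith : (0:ℝ) < t^2 - y)
  nlinarith
lemma aux_le_t (t y : ℝ) (ht : 1 ≤ t) (hy : 0 < y) (hP : 0 ≤ (t^2+1)*y - t*y^2 - t) : y ≤ t := by
  by_contra h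
  push_neg at h
  have := mul_pos (by nlinarith : (0:ℝ) < t*y - 1) (by linarith : (0:ℝ) < y - t)
  nlinarith
lemma caseA (t y1 y2 : ℝ) (ht : 1 ≤ t) (hy2 : 0 < y2)
    (hc : (t^2+1)*y1 ≤ t*(t+1))
    (hP2 : 0 ≤ (t^2+1)*y2 - t*y2^2 - t) (hQ2 : 0 ≤ (t^2+1)*y2 - y2^2 - t^2) :
    t*((t^2+1)*y1 - y1^2 - t^2) + t*(y1-y2)^2 ≤ (t-1)^2*(y1*y2) := by
  have h1 : 1 ≤ y2 := aux_one_le t y2 ht hy2 hQ2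
  have h2 : y2 ≤ t := aux_le_t t y2 ht hy2 hP2
  nlinarith [mul_nonneg (sub_nonneg.2 h2) (by nlinarith : (0:ℝ) ≤ t*(y2+t) - (t^2+1)*y1)]
lemma caseB (t y1 y2 : ℝ) (ht : 1 ≤ t) (hy2 : 0 < y2)
    (hc : t*(t+1) ≤ (t^2+1)*y1)
    (hP2 : 0 ≤ (t^2+1)*y2 - t*y2^2 - t) (hQ2 : 0 ≤ (t^2+1)*y2 - y2^2 - t^2) :
    ((t^2+1)*y1 - t*y1^2 - t) + t*(y1-y2)^2 ≤ (t-1)^2*(y1*y2) := by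
  have h1 : 1 ≤ y2 := aux_one_le t y2 ht hy2 hQ2
  have h2 : y2 ≤ t := aux_le_t t y2 ht hy2 hP2
  nlinarith [mul_nonneg (sub_nonneg.2 h1) (by nlinarith : (0:ℝ) ≤ (t^2+1)*y1 - t*(y2+1))]

set_option maxHeartbeats 1000000 in
lemma core (t x1 y1 x2 y2 : ℝ) (ht : 1 ≤ t) (hy1 : 0 < y1) (hy2 : 0 < y2)
    (hx : 0 ≤ x1*x2)
    (hP1 : t*(x1^2+(y1-1)^2) ≤ (1-t)^2*y1) (hQ1 : x1^2+(y1-t)^2 ≤ (1-t)^2*y1)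
    (hP2 : t*(x2^2+(y2-1)^2) ≤ (1-t)^2*y2) (hQ2 : x2^2+(y2-t)^2 ≤ (1-t)^2*y2) :
    t*((x1-x2)^2+(y1-y2)^2) ≤ (1-t)^2*(y1*y2) := by
  have ht0 : 0 < t := by linarith
  have hP1' : t*x1^2 ≤ (t^2+1)*y1 - t*y1^2 - t := by nlinarith [hP1]
  have hQ1' : x1^2 ≤ (t^2+1)*y1 - y1^2 - t^2 := by nlinarith [hQ1]
  have hP2' : t*x2^2 ≤ (t^2+1)*y2 - t*y2^2 - t := by nlinarith [hP2]
  have hQ2' : x2^2 ≤ (t^2+1)*y2 - y2^2 - t^2 := by nlinarith [hQ2]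
  have hPp1 : 0 ≤ (t^2+1)*y1 - t*y1^2 - t := le_trans (by positivity) hP1'
  have hQp1 : 0 ≤ (t^2+1)*y1 - y1^2 - t^2 := le_trans (by positivity) hQ1'
  have hPp2 : 0 ≤ (t^2+1)*y2 - t*y2^2 - t := le_trans (by positivity) hP2'
  have hQp2 : 0 ≤ (t^2+1)*y2 - y2^2 - t^2 := le_trans (by positivity) hQ2'
  rcases le_total (x2^2) (x1^2) with hcmp | hcmp
  · have hb : (x1-x2)^2 ≤ x1^2 := sq_sub_le_left x1 x2 hx hcmp
    rcases le_total ((t^2+1)*y1) (t*(t+1)) with hcA | hcB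
    · have h2 := caseA t y1 y2 ht hy2 hcA hPp2 hQp2
      have e1 := mul_le_mul_of_nonneg_left hb ht0.le
      have e2 := mul_le_mul_of_nonneg_left hQ1' ht0.le
      linarith [h2, e1, e2]
    · have h2 := caseB t y1 y2 ht hy2 hcB hPp2 hQp2
      have e1 := mul_le_mul_of_nonneg_left hb ht0.le
      linarith [h2, e1, hP1']
  · have hb : (x2-x1)^2 ≤ x2^2 := sq_sub_le_left x2 x1 (by linarith [hx, mul_comm x1 x2]) hcmp
    rcases le_total ((t^2+1)*y2) (t*(t+1)) with hcA | hcB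
    · have h2 := caseA t y2 y1 ht hy1 hcA hPp1 hQp1
      have e1 := mul_le_mul_of_nonneg_left hb ht0.le
      have e2 := mul_le_mul_of_nonneg_left hQ2' ht0.le
      linarith [h2, e1, e2]
    · have h2 := caseB t y2 y1 ht hy1 hcB hPp1 hQp1
      have e1 := mul_le_mul_of_nonneg_left hb ht0.le
      linarith [h2, e1, hP2']

lemma exists_side (u v : ℍ) : ∃ σ : ℍ → ℝ, ∀ a b : ℍ,
    0 ≤ σ a * σ b → dist a u ≤ dist u v → dist a v ≤ dist u v →
    dist b u ≤ dist u v → dist b v ≤ dist u v → dist a b ≤ dist u v := by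
  obtain ⟨f, hf, hfu, hfre, hfim⟩ := exists_normalizer u v
  refine ⟨fun z => (f z).re, ?_⟩
  intro a b hσ hau hav hbu hbv
  set t := (f v).im with htdef
  have ht : 1 ≤ t := hfim
  have htpos : (0:ℝ) < t := by linarith
  have hfv : ((f v : ℂ)) = (t:ℂ) * Complex.I := by
    apply Complex.ext <;> simp [UpperHalfPlane.coe_re, UpperHalfPlane.coe_im, hfre, htdef]
  -- rewrite all distances through f
  rw [← hf a b, ← hf u v]
  rw [← hf a u, ← hf u v] at hau
  rw [← hf a v, ← hf u v] at hav
  rw [← hf b u, ← hf u v] at hbu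
  rw [← hf b v, ← hf u v] at hbv
  rw [hfu] at hau hbu hav hbv
  rw [hfu]
  set a' := f a
  set b' := f b
  set x1 := a'.re with hx1; set y1 := a'.im with hy1d
  set x2 := b'.re with hx2; set y2 := b'.im with hy2d
  have hy1 : 0 < y1 := a'.im_pos
  have hy2 : 0 < y2 := b'.im_pos
  have hmkim : (mkI).im = 1 := rfl
  have n1 : Complex.normSq ((a':ℂ) - mkI) = x1^2 + (y1-1)^2 := by
    rw [mkI_coe]
    simp [Complex.normSq_apply, Complex.sub_re, Complex.sub_im,
      UpperHalfPlane.coe_re, UpperHalfPlane.coe_im]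
    ring
  have n1b : Complex.normSq ((b':ℂ) - mkI) = x2^2 + (y2-1)^2 := by
    rw [mkI_coe]
    simp [Complex.normSq_apply, Complex.sub_re, Complex.sub_im,
      UpperHalfPlane.coe_re, UpperHalfPlane.coe_im]
    ring
  have n2 : Complex.normSq ((mkI:ℂ) - (f v)) = (1-t)^2 := by
    rw [mkI_coe, hfv]
    simp [Complex.normSq_apply, Complex.sub_re, Complex.sub_im]
    ring
  have n3 : Complex.normSq ((a':ℂ) - (f v)) = x1^2 + (y1-t)^2 := by
    rw [hfv]
    simp [Complex.normSq_apply, Complex.sub_re, Complex.sub_im,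
      UpperHalfPlane.coe_re, UpperHalfPlane.coe_im]
    ring
  have n3b : Complex.normSq ((b':ℂ) - (f v)) = x2^2 + (y2-t)^2 := by
    rw [hfv]
    simp [Complex.normSq_apply, Complex.sub_re, Complex.sub_im,
      UpperHalfPlane.coe_re, UpperHalfPlane.coe_im]
    ring
  have n6 : Complex.normSq ((a':ℂ) - (b':ℂ)) = (x1-x2)^2 + (y1-y2)^2 := by
    simp [Complex.normSq_apply, Complex.sub_re, Complex.sub_im,
      UpperHalfPlane.coe_re, UpperHalfPlane.coe_im]
    ring
  rw [dist_le_dist_iff_aux] at hau hav hbu hbv ⊢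
  rw [n1, n2, hmkim] at hau
  rw [n1b, n2, hmkim] at hbu
  rw [n3, n2, hmkim] at hav
  rw [n3b, n2, hmkim] at hbv
  rw [n6, n2, hmkim]
  have hσ' : 0 ≤ x1 * x2 := hσ
  have hP1 : t*(x1^2+(y1-1)^2) ≤ (1-t)^2*y1 := by linarith [hau]
  have hQ1 : x1^2+(y1-t)^2 ≤ (1-t)^2*y1 := by
    have h3 : (x1^2+(y1-t)^2) * t ≤ (1-t)^2 * y1 * t := by linarith [hav]
    exact le_of_mul_le_mul_right (by linarith [h3]) htpos
  have hP2 : t*(x2^2+(y2-1)^2) ≤ (1-t)^2*y2 := by linarith [hbu]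
  have hQ2 : x2^2+(y2-t)^2 ≤ (1-t)^2*y2 := by
    have h3 : (x2^2+(y2-t)^2) * t ≤ (1-t)^2 * y2 * t := by linarith [hbv]
    exact le_of_mul_le_mul_right (by linarith [h3]) htpos
  have hfin := core t x1 y1 x2 y2 ht hy1 hy2 hσ' hP1 hQ1 hP2 hQ2
  linarith [hfin]

end
end CNEEOAux

/-- Every hyperbolic unit disk graph admits a CNEEO. -/
theorem hyperbolicUnitDiskGraph_exists_CNEEO {V : Type*} [Fintype V]
    (p : V → UpperHalfPlane) (R : ℝ) (hR : 0 ≤ R)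
    (G : SimpleGraph V)
    (hG : ∀ u v, G.Adj u v ↔ u ≠ v ∧ dist (p u) (p v) ≤ R) :
    ∃ L : List (Sym2 V), IsCNEEO G L := by
  classical
  set len : Sym2 V → ℝ := Sym2.lift ⟨fun a b => dist (p a) (p b), fun a b => dist_comm _ _⟩
    with hlen
  set L : List (Sym2 V) := G.edgeFinset.toList.mergeSort (fun e f => decide (len f ≤ len e))
    with hLdef
  have hperm : L.Perm G.edgeFinset.toList := List.mergeSort_perm _ _
  have hnodup : L.Nodup := hperm.nodup_iff.2 (Finset.nodup_toList _)
  have hmem : ∀ e, e ∈ L ↔ e ∈ G.edgeSet := by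
    intro e; rw [hperm.mem_iff, Finset.mem_toList, SimpleGraph.mem_edgeFinset]
  have hsorted : L.Pairwise (fun e f => len f ≤ len e) := by
    rw [hLdef]
    simpa using List.pairwise_mergeSort
      (le := fun e f : Sym2 V => decide (len f ≤ len e))
      (fun a b c h₁ h₂ => by
        simp only [decide_eq_true_eq] at h₁ h₂ ⊢; exact le_trans h₂ h₁)
      (fun a b => by simpa using le_total (len b) (len a))
      G.edgeFinset.toList
  have hkey : ∀ (i : Fin L.length) (e : Sym2 V), e ∈ L → e ∉ L.take i.1 →
      len e ≤ len (L.get i) := by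
    intro i e heL hnt
    have hsplit : e ∈ L.take i.1 ++ L.drop i.1 := by
      rw [List.take_append_drop]; exact heL
    have hdrop : e ∈ L.drop i.1 := by
      rcases List.mem_append.1 hsplit with h | h
      · exact absurd h hnt
      · exact h
    have hcons : L.drop i.1 = L.get i :: L.drop (i.1+1) := by
      rw [List.drop_eq_getElem_cons i.isLt, List.get_eq_getElem]
    have hs2 : (L.drop i.1).Pairwise (fun e f => len f ≤ len e) :=
      hsorted.sublist (List.drop_sublist _ _)
    rw [hcons] at hdrop hs2
    rcases List.mem_cons.1 hdrop with h | h
    · rw [h]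
    · exact (List.pairwise_cons.1 hs2).1 e h
  refine ⟨L, hnodup, hmem, ?_⟩
  intro i
  obtain ⟨u, v, huv⟩ : ∃ u v, L.get i = s(u, v) := by
    induction (L.get i) using Sym2.inductionOn with
    | hf x y => exact ⟨x, y, rfl⟩
  have heE : L.get i ∈ G.edgeSet := (hmem _).1 (List.get_mem L i)
  have hadj : G.Adj u v := by rwa [huv, SimpleGraph.mem_edgeSet] at heE
  have hlenE : len (L.get i) = dist (p u) (p v) := by rw [huv, hlen, Sym2.lift_mk]
  have hRuv : dist (p u) (p v) ≤ R := ((hG u v).1 hadj).2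
  obtain ⟨σ, hσ⟩ := exists_side (p u) (p v)
  set N : Set V := {w | ∀ x ∈ L.get i, (G.deleteEdges {e | e ∈ L.take i.1}).Adj x w} with hN
  -- distances for members of N
  have hNdist : ∀ w ∈ N, dist (p w) (p u) ≤ dist (p u) (p v) ∧
      dist (p w) (p v) ≤ dist (p u) (p v) := by
    intro w hw
    have hu' := hw u (by rw [huv]; exact Sym2.mem_mk_left u v)
    have hv' := hw v (by rw [huv]; exact Sym2.mem_mk_right u v)
    rw [SimpleGraph.deleteEdges_adj] at hu' hv'
    have h1 : s(u, w) ∈ L := (hmem _).2 ((SimpleGraph.mem_edgeSet G).2 hu'.1)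
    have h2 : s(v, w) ∈ L := (hmem _).2 ((SimpleGraph.mem_edgeSet G).2 hv'.1)
    have k1 := hkey i _ h1 hu'.2
    have k2 := hkey i _ h2 hv'.2
    rw [hlenE] at k1 k2
    rw [hlen] at k1 k2
    simp only [Sym2.lift_mk] at k1 k2
    exact ⟨by rwa [dist_comm], by rwa [dist_comm]⟩
  refine ⟨{w | w ∈ N ∧ 0 ≤ σ (p w)}, {w | w ∈ N ∧ σ (p w) < 0}, ?_, ?_, ?_, ?_⟩
  · ext w
    simp only [Set.mem_union, Set.mem_setOf_eq]
    constructor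
    · intro h
      rcases le_or_gt 0 (σ (p w)) with h0 | h0
      · exact Or.inl ⟨h, h0⟩
      · exact Or.inr ⟨h, h0⟩
    · rintro (⟨h, _⟩ | ⟨h, _⟩) <;> exact h
  · rw [Set.disjoint_left]
    rintro w ⟨_, h0⟩ ⟨_, h1⟩
    linarith
  · rintro w1 ⟨hw1, hs1⟩ w2 ⟨hw2, hs2⟩ hne
    rw [hG]
    refine ⟨hne, ?_⟩
    obtain ⟨d1u, d1v⟩ := hNdist w1 hw1
    obtain ⟨d2u, d2v⟩ := hNdist w2 hw2
    exact le_trans (hσ (p w1) (p w2) (mul_nonneg hs1 hs2) d1u d1v d2u d2v) hRuv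
  · rintro w1 ⟨hw1, hs1⟩ w2 ⟨hw2, hs2⟩ hne
    rw [hG]
    refine ⟨hne, ?_⟩
    obtain ⟨d1u, d1v⟩ := hNdist w1 hw1
    obtain ⟨d2u, d2v⟩ := hNdist w2 hw2
    exact le_trans (hσ (p w1) (p w2) (mul_pos_of_neg_of_neg hs1 hs2).le d1u d1v d2u d2v) hRuv
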